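/- In the polynomial ring ℂ[α,β,γ], the element γ³ belongs to the ideal I_Q generated by Q¹ = α³ + 5αβ + 4γ − 24α, Q² = α²β + β² + (4/3)αγ + 8α² + 16β + 64, and Q³ = α²γ + βγ + 8γ. (Equivalently, γ³ = 0 in the invariant part of the quantum cohomology ring of the moduli space of rank-2 odd-degree stable bundles over a genus-3 Riemann surface.) -/
import Mathlib


open MvPolynomial

/-- α, β, γ as the three variables of ℂ[α,β,γ]. -/
noncomputable def α : MvPolynomial (Fin 3) ℂ := X 0
noncomputable def β : MvPolynomial (Fin 3) ℂ := X 1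
noncomputable def γ : MvPolynomial (Fin 3) ℂ := X 2

/-- γ³ lies in the ideal of quantum relations
    (α³ + 5αβ + 4γ − 24α, α²β + β² + (4/3)αγ + 8α² + 16β + 64, α²γ + βγ + 8γ). -/
theorem gamma_cubed_mem_quantum_relations :
    γ ^ 3 ∈ Ideal.span ({α ^ 3 + 5 * α * β + 4 * γ - 24 * α,
      α ^ 2 * β + β ^ 2 + C ((4 : ℂ) / 3) * (α * γ) + 8 * α ^ 2 + 16 * β + 64,
      α ^ 2 * γ + β * γ + 8 * γ} : Set (MvPolynomial (Fin 3) ℂ)) := by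
  set q1 : MvPolynomial (Fin 3) ℂ := α ^ 3 + 5 * α * β + 4 * γ - 24 * α with hq1def
  set q2 : MvPolynomial (Fin 3) ℂ :=
    α ^ 2 * β + β ^ 2 + C ((4 : ℂ) / 3) * (α * γ) + 8 * α ^ 2 + 16 * β + 64 with hq2def
  set q3 : MvPolynomial (Fin 3) ℂ := α ^ 2 * γ + β * γ + 8 * γ with hq3def
  have hq1 : q1 ∈ Ideal.span ({q1, q2, q3} : Set (MvPolynomial (Fin 3) ℂ)) :=
    Ideal.subset_span (by simp)
  have hq2 : q2 ∈ Ideal.span ({q1, q2, q3} : Set (MvPolynomial (Fin 3) ℂ)) :=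
    Ideal.subset_span (by simp)
  have hq3 : q3 ∈ Ideal.span ({q1, q2, q3} : Set (MvPolynomial (Fin 3) ℂ)) :=
    Ideal.subset_span (by simp)
  have hc : (C ((4 : ℂ) / 3) : MvPolynomial (Fin 3) ℂ) * 3 = 4 := by
    have h4 : ((4:ℂ)/3) * 3 = 4 := by norm_num
    rw [← map_ofNat (C : ℂ →+* MvPolynomial (Fin 3) ℂ) 3, ← map_mul, h4,
      map_ofNat]
  have hk : (C ((192 : ℂ)⁻¹) : MvPolynomial (Fin 3) ℂ) * 192 = 1 := by
    have h4 : ((192:ℂ)⁻¹) * 192 = 1 := by norm_num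
    rw [← map_ofNat (C : ℂ →+* MvPolynomial (Fin 3) ℂ) 192, ← map_mul, h4, map_one]
  have key : γ ^ 3 = C ((192 : ℂ)⁻¹) *
      (((13824:MvPolynomial (Fin 3) ℂ) + 48 * γ^2 + 576 * β - 504 * β^2 - 45 * β^3
          + 288 * α * γ - 60 * α * β * γ + 1152 * α^2 - 288 * α^2 * β
          - 54 * α^2 * β^2 - 12 * α^3 * γ - 72 * α^4 - 9 * α^4 * β) * q1
        + (3 * ((1728:MvPolynomial (Fin 3) ℂ) * α - 720 * α * β + 75 * α * β^2
          - 144 * α^3 + 30 * α^3 * β + 3 * α^5)) * q2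
        + ((-6912:MvPolynomial (Fin 3) ℂ) + 576 * β + 180 * β^2 + 288 * α^2
          + 36 * α^2 * β) * q3) := by
    rw [hq1def, hq2def, hq3def]
    linear_combination (-(γ^3)) * hk -
      (C ((192 : ℂ)⁻¹) * ((1728:MvPolynomial (Fin 3) ℂ) * α - 720 * α * β
        + 75 * α * β^2 - 144 * α^3 + 30 * α^3 * β + 3 * α^5) * (α * γ)) * hc
  rw [key]
  exact Ideal.mul_mem_left _ _ (add_mem (add_mem (Ideal.mul_mem_left _ _ hq1)
    (Ideal.mul_mem_left _ _ hq2)) (Ideal.mul_mem_left _ _ hq3))
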